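/- Let A be a finite-dimensional k-algebra, G a finite-dimensional right A-module, Λ = End_A(G), and I = add G. A morphism g : M → Y in mod A with Y ∈ I is left minimal if and only if the induced morphism Hom_A(g, G) : Hom_A(Y, G) → Hom_A(M, G) of left Λ-modules is right minimal. -/

import Mathlib

universe u

/-- Right minimality. -/
def RightMinimal {R X M : Type*} [Ring R] [AddCommGroup X] [Module R X]
    [AddCommGroup M] [Module R M] (f : X →ₗ[R] M) : Prop :=
  ∀ h : X →ₗ[R] X, f.comp h = f → Function.Bijective h

/-- Left minimality. -/
def LeftMinimal {R M Y : Type*} [Ring R] [AddCommGroup M] [Module R M]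
    [AddCommGroup Y] [Module R Y] (g : M →ₗ[R] Y) : Prop :=
  ∀ h : Y →ₗ[R] Y, h.comp g = g → Function.Bijective h

/-- `Z` belongs to `add G`. -/
def InAdd (R : Type u) [Ring R] (G Z : Type u) [AddCommGroup G] [Module R G]
    [AddCommGroup Z] [Module R Z] : Prop :=
  ∃ (m : ℕ) (p : (Fin m → G) →ₗ[R] Z) (s : Z →ₗ[R] (Fin m → G)), p.comp s = LinearMap.id

/-- `Hom_A(g, G)`: precomposition with `g`, as a morphism of left `Λ = End_A(G)`-modules
`Hom_A(Y, G) → Hom_A(M, G)`. -/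
def precompEnd {R : Type u} [Ring R] {G M Y : Type u} [AddCommGroup G] [Module R G]
    [AddCommGroup M] [Module R M] [AddCommGroup Y] [Module R Y] (g : M →ₗ[R] Y) :
    (Y →ₗ[R] G) →ₗ[Module.End R G] (M →ₗ[R] G) where
  toFun f := f.comp g
  map_add' f₁ f₂ := by ext; simp
  map_smul' l f := by ext; simp

section aux

variable {R : Type u} [Ring R] {G M Y : Type u} [AddCommGroup G] [Module R G]
    [AddCommGroup M] [Module R M] [AddCommGroup Y] [Module R Y]
    {m : ℕ} (p : (Fin m → G) →ₗ[R] Y) (s : Y →ₗ[R] (Fin m → G))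
    (hps : p.comp s = LinearMap.id)

theorem precompEnd_apply (g : M →ₗ[R] Y) (f : Y →ₗ[R] G) :
    precompEnd (G := G) g f = f.comp g := rfl

include p s hps in
/-- Faithfulness of `Hom_A(-, G)` on morphisms into objects of `add G`. -/
theorem precompEnd_inj {h₁ h₂ : M →ₗ[R] Y}
    (h : precompEnd (G := G) h₁ = precompEnd (G := G) h₂) : h₁ = h₂ := by
  have key : ∀ f : Y →ₗ[R] G, f.comp h₁ = f.comp h₂ := fun f => congrArg (· f) h
  ext x
  have hs : s (h₁ x) = s (h₂ x) := by
    funext i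
    have := congrArg (fun φ : M →ₗ[R] G => φ x) (key ((LinearMap.proj i).comp s))
    simpa using this
  have e1 := congrArg (fun φ : Y →ₗ[R] Y => φ (h₁ x)) hps
  have e2 := congrArg (fun φ : Y →ₗ[R] Y => φ (h₂ x)) hps
  simp only [LinearMap.comp_apply, LinearMap.id_apply] at e1 e2
  rw [← e1, ← e2, hs]

include p s hps in
/-- Fullness of `Hom_A(-, G)` on morphisms into objects of `add G`. -/
theorem precompEnd_surj (H : (Y →ₗ[R] G) →ₗ[Module.End R G] (M →ₗ[R] G)) :
    ∃ h : M →ₗ[R] Y, precompEnd (G := G) h = H := by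
  set e : Fin m → (Y →ₗ[R] G) := fun i => (LinearMap.proj i).comp s with he
  set c : (Y →ₗ[R] G) → Fin m → Module.End R G :=
    fun f i => (f.comp p).comp (LinearMap.single R (fun _ : Fin m => G) i) with hc
  have hf : ∀ f : Y →ₗ[R] G, f = ∑ i, c f i • e i := by
    intro f
    ext y
    have hsy : p (s y) = y := by
      have := congrArg (fun φ : Y →ₗ[R] Y => φ y) hps
      simpa using this
    calc f y = f (p (s y)) := by rw [hsy]
      _ = (f.comp p) (∑ i, Pi.single i (s y i)) := by
          rw [Finset.univ_sum_single (s y)]; rfl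
      _ = ∑ i, (f.comp p) (Pi.single i (s y i)) := map_sum _ _ _
      _ = ∑ i, (c f i • e i) y := by
          refine Finset.sum_congr rfl fun i _ => ?_
          simp [hc, he, LinearMap.smul_apply, Module.End.smul_def]
      _ = (∑ i, c f i • e i) y := by simp
  refine ⟨p.comp (LinearMap.pi fun i => H (e i)), ?_⟩
  ext f x
  show f (p (LinearMap.pi (fun i => H (e i)) x)) = H f x
  calc f (p (LinearMap.pi (fun i => H (e i)) x))
      = (f.comp p) (∑ i, Pi.single i (H (e i) x)) := by
        rw [Finset.univ_sum_single (fun i => H (e i) x)]; rfl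
    _ = ∑ i, (f.comp p) (Pi.single i (H (e i) x)) := map_sum _ _ _
    _ = ∑ i, (c f i • H (e i)) x := by
        refine Finset.sum_congr rfl fun i _ => ?_
        simp [hc, LinearMap.smul_apply, Module.End.smul_def]
    _ = (∑ i, c f i • H (e i)) x := by simp
    _ = H (∑ i, c f i • e i) x := by simp [map_sum, map_smul]
    _ = H f x := by rw [← hf f]

end aux

/-- For `Y ∈ add G`, a morphism `g : M → Y` is left minimal in `mod A` iff
`Hom_A(g, G) : Hom_A(Y, G) → Hom_A(M, G)` is right minimal as a morphism of left
`Λ = End_A(G)`-modules. -/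
theorem leftMinimal_iff_precomp_rightMinimal
    {k : Type u} {A : Type u} [Field k] [Ring A] [Algebra k A] [FiniteDimensional k A]
    (G : Type u) [AddCommGroup G] [Module Aᵐᵒᵖ G] [Module k G] [IsScalarTower k Aᵐᵒᵖ G]
    [FiniteDimensional k G]
    {M Y : Type u}
    [AddCommGroup M] [Module Aᵐᵒᵖ M] [Module k M] [IsScalarTower k Aᵐᵒᵖ M]
    [FiniteDimensional k M]
    [AddCommGroup Y] [Module Aᵐᵒᵖ Y] [Module k Y] [IsScalarTower k Aᵐᵒᵖ Y]
    [FiniteDimensional k Y]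
    (hY : InAdd Aᵐᵒᵖ G Y) (g : M →ₗ[Aᵐᵒᵖ] Y) :
    LeftMinimal g ↔ RightMinimal (precompEnd (G := G) g) := by
  obtain ⟨m, p, s, hps⟩ := hY
  constructor
  · -- g left minimal → Hom(g,G) right minimal
    intro hmin H hH
    obtain ⟨h, rfl⟩ := precompEnd_surj p s hps H
    have hg : h.comp g = g := by
      apply precompEnd_inj p s hps
      ext f x
      exact DFunLike.congr_fun (DFunLike.congr_fun hH f) x
    have hb := hmin h hg
    set E := LinearEquiv.ofBijective h hb with hE
    refine Function.bijective_iff_has_inverse.mpr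
      ⟨precompEnd (G := G) (E.symm : Y →ₗ[Aᵐᵒᵖ] Y), ?_, ?_⟩
    · intro f
      ext y
      exact congrArg f (E.apply_symm_apply y)
    · intro f
      ext y
      exact congrArg f (E.symm_apply_apply y)
  · -- Hom(g,G) right minimal → g left minimal
    intro hmin h hh
    have hb' : Function.Bijective (precompEnd (G := G) h) := by
      apply hmin
      ext f x
      exact congrArg f (DFunLike.congr_fun hh x)
    set E := LinearEquiv.ofBijective (precompEnd (G := G) h) hb' with hE
    obtain ⟨h', hh'⟩ := precompEnd_surj p s hps E.symm.toLinearMap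
    have l1 : h'.comp h = LinearMap.id := by
      apply precompEnd_inj p s hps
      ext f x
      have e1 : precompEnd (G := G) h' f = E.symm f := congrArg (fun φ => φ f) hh'
      have : (precompEnd (G := G) h) (precompEnd (G := G) h' f) x = f x := by
        rw [e1]
        exact congrArg (fun φ : Y →ₗ[Aᵐᵒᵖ] G => φ x) (E.apply_symm_apply f)
      exact this
    have l2 : h.comp h' = LinearMap.id := by
      apply precompEnd_inj p s hps
      ext f x
      have e2 : precompEnd (G := G) h' (precompEnd (G := G) h f)
          = E.symm (E f) := congrArg (fun φ => φ (precompEnd (G := G) h f)) hh'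
      have : precompEnd (G := G) h' (precompEnd (G := G) h f) x = f x := by
        rw [e2]
        exact congrArg (fun φ : Y →ₗ[Aᵐᵒᵖ] G => φ x) (E.symm_apply_apply f)
      exact this
    refine Function.bijective_iff_has_inverse.mpr ⟨h', fun x => ?_, fun y => ?_⟩
    · exact DFunLike.congr_fun l1 x
    · exact DFunLike.congr_fun l2 y
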